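/- Let β ∈ (0,1) and set C_β = (1+β)/(1−β). For each dimension d, let N = N(d) be a number of samples with N(d) ≪ exp(d/(2(C_β² + 2))) (i.e., N(d)·exp(−d/(2(C_β² + 2))) → 0 as d → ∞). Let x_1, …, x_N and ε be i.i.d. samples from the standard Gaussian distribution N(0, I_d) on ℝ^d, and define z = β·x_1 + (1−β)·ε. Then the probability that z lies outside the convex hull Conv({x_1, …, x_N}) tends to 1 as d → ∞: lim_{d→∞} P(z ∉ Conv({x_1, …, x_N})) = 1. -/

import Mathlib

open MeasureTheory ProbabilityTheory Filter
open scoped RealInnerProductSpace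

/-- The standard Gaussian distribution `N(0, I_d)` on `ℝ^d`, i.e. the product of `d`
independent standard normal distributions `N(0,1)`. -/
noncomputable def stdGaussian (d : ℕ) : Measure (EuclideanSpace ℝ (Fin d)) :=
  (Measure.pi fun _ : Fin d => gaussianReal 0 1).map
    (MeasurableEquiv.toLp 2 (Fin d → ℝ))

open Real
open scoped ENNReal

section Auxiliary

instance stdGaussian.instIsProbabilityMeasure (d : ℕ) :
    IsProbabilityMeasure (stdGaussian d) := by
  unfold _root_.stdGaussian
  exact Measure.isProbabilityMeasure_map
    (MeasurableEquiv.toLp 2 (Fin d → ℝ)).measurable.aemeasurable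

lemma groot_lintegral_pi_prod {n : ℕ} (f : Fin n → ℝ → ℝ≥0∞) (hf : ∀ j, Measurable (f j)) :
    ∫⁻ y, ∏ j, f j (y j) ∂(Measure.pi fun _ : Fin n => gaussianReal 0 1)
      = ∏ j, ∫⁻ t, f j t ∂(gaussianReal 0 1) := by
  induction n with
  | zero => simp
  | succ n ih =>
    have hmp := measurePreserving_piFinSuccAbove (fun _ : Fin (n + 1) => gaussianReal 0 1) 0
    set e := MeasurableEquiv.piFinSuccAbove (fun _ : Fin (n + 1) => ℝ) 0
    have key : ∀ y : Fin (n + 1) → ℝ,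
        (∏ j, f j (y j)) = f 0 (e y).1 * ∏ j, f j.succ ((e y).2 j) := by
      intro y
      rw [Fin.prod_univ_succ]
      congr 1
    calc ∫⁻ y, ∏ j, f j (y j) ∂(Measure.pi fun _ : Fin (n+1) => gaussianReal 0 1)
        = ∫⁻ y, f 0 (e y).1 * ∏ j, f j.succ ((e y).2 j)
            ∂(Measure.pi fun _ : Fin (n+1) => gaussianReal 0 1) := by simp_rw [key]
      _ = ∫⁻ p : ℝ × (Fin n → ℝ), f 0 p.1 * ∏ j, f j.succ (p.2 j)
            ∂((gaussianReal 0 1).prod (Measure.pi fun _ : Fin n => gaussianReal 0 1)) := by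
          exact hmp.lintegral_comp (((hf 0).comp measurable_fst).mul <|
            Finset.measurable_prod _ fun (j : Fin n) _ => (hf j.succ).comp <|
              (measurable_pi_apply j).comp measurable_snd)
      _ = (∫⁻ t, f 0 t ∂(gaussianReal 0 1)) * ∫⁻ y, ∏ j, f j.succ (y j)
            ∂(Measure.pi fun _ : Fin n => gaussianReal 0 1) := by
          exact lintegral_prod_mul (hf 0).aemeasurable
            (Finset.measurable_prod _ fun (j : Fin n) _ => (hf j.succ).comp <|
              measurable_pi_apply j).aemeasurable
      _ = ∏ j, ∫⁻ t, f j t ∂(gaussianReal 0 1) := by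
          rw [ih (fun j => f j.succ) (fun j => hf j.succ), Fin.prod_univ_succ]

lemma groot_gaussian_lintegral_exp (c : ℝ) :
    ∫⁻ t, ENNReal.ofReal (Real.exp (c * t)) ∂(gaussianReal 0 1) =
      ENNReal.ofReal (Real.exp (c ^ 2 / 2)) := by
  rw [gaussianReal_of_var_ne_zero 0 one_ne_zero,
    lintegral_withDensity_eq_lintegral_mul _ (measurable_gaussianPDF 0 1)
      (by fun_prop)]
  have hpdf : ∀ t : ℝ, (gaussianPDF 0 1 * fun t => ENNReal.ofReal (Real.exp (c * t))) t =
      ENNReal.ofReal ((Real.sqrt (2 * π))⁻¹ *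
        (Real.exp (c ^ 2 / 2) * Real.exp (-(1/2) * (t - c) ^ 2))) := by
    intro t
    simp only [Pi.mul_apply]
    rw [gaussianPDF_def, ← ENNReal.ofReal_mul (gaussianPDFReal_nonneg 0 1 t)]
    congr 1
    rw [gaussianPDFReal_def]
    push_cast
    rw [mul_assoc]
    simp only [← Real.exp_add]
    congr 1
    · norm_num
    · ring
  simp_rw [hpdf]
  have hint : Integrable (fun t : ℝ => (Real.sqrt (2 * π))⁻¹ *
      (Real.exp (c ^ 2 / 2) * Real.exp (-(1/2) * (t - c) ^ 2))) := by
    apply Integrable.const_mul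
    apply Integrable.const_mul
    exact (integrable_exp_neg_mul_sq (by norm_num : (0:ℝ) < 1/2)).comp_sub_right c
  rw [← ofReal_integral_eq_lintegral_ofReal hint (ae_of_all _ fun t => by positivity)]
  congr 1
  rw [integral_const_mul, integral_const_mul, integral_sub_right_eq_self
      (fun t => Real.exp (-(1/2) * t ^ 2)) c, integral_gaussian (1/2)]
  rw [show π / (1/2 : ℝ) = 2 * π by ring]
  have h2π : Real.sqrt (2 * π) ≠ 0 := by positivity
  field_simp

lemma groot_gaussian_lintegral_exp_neg_sq {l : ℝ} (hl : 0 ≤ l) :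
    ∫⁻ t, ENNReal.ofReal (Real.exp (-l * t ^ 2)) ∂(gaussianReal 0 1) =
      ENNReal.ofReal ((Real.sqrt (1 + 2 * l))⁻¹) := by
  rw [gaussianReal_of_var_ne_zero 0 one_ne_zero,
    lintegral_withDensity_eq_lintegral_mul _ (measurable_gaussianPDF 0 1)
      (by fun_prop)]
  have hpdf : ∀ t : ℝ, (gaussianPDF 0 1 * fun t => ENNReal.ofReal (Real.exp (-l * t ^ 2))) t =
      ENNReal.ofReal ((Real.sqrt (2 * π))⁻¹ * Real.exp (-(l + 1/2) * t ^ 2)) := by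
    intro t
    simp only [Pi.mul_apply]
    rw [gaussianPDF_def, ← ENNReal.ofReal_mul (gaussianPDFReal_nonneg 0 1 t)]
    congr 1
    rw [gaussianPDFReal_def]
    push_cast
    rw [mul_assoc]
    simp only [← Real.exp_add]
    congr 1
    · norm_num
    · ring
  simp_rw [hpdf]
  have hint : Integrable (fun t : ℝ =>
      (Real.sqrt (2 * π))⁻¹ * Real.exp (-(l + 1/2) * t ^ 2)) :=
    (integrable_exp_neg_mul_sq (by linarith : (0:ℝ) < l + 1/2)).const_mul _
  rw [← ofReal_integral_eq_lintegral_ofReal hint (ae_of_all _ fun t => by positivity)]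
  congr 1
  rw [integral_const_mul, integral_gaussian (l + 1/2)]
  rw [inv_mul_eq_div, ← Real.sqrt_inv,
    show (1 + 2*l : ℝ)⁻¹ = (π / (l + 1/2)) / (2 * π) by
      field_simp
      ring,
    Real.sqrt_div (by positivity : (0:ℝ) ≤ π / (l + 1/2)),
    Real.sqrt_div (by positivity : (0:ℝ) ≤ π)]

lemma groot_stdGaussian_lintegral_eq (d : ℕ) (f : EuclideanSpace ℝ (Fin d) → ℝ≥0∞) :
    ∫⁻ x, f x ∂(stdGaussian d) =
      ∫⁻ y, f ((MeasurableEquiv.toLp 2 (Fin d → ℝ)) y)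
        ∂(Measure.pi fun _ : Fin d => gaussianReal 0 1) :=
  lintegral_map_equiv f (MeasurableEquiv.toLp 2 (Fin d → ℝ))

lemma groot_inner_equiv_symm (d : ℕ) (e : EuclideanSpace ℝ (Fin d)) (y : Fin d → ℝ) :
    ⟪e, (MeasurableEquiv.toLp 2 (Fin d → ℝ)) y⟫ = ∑ j, e j * y j := by
  rw [PiLp.inner_apply]
  simp [MeasurableEquiv.coe_toLp, mul_comm]

lemma groot_norm_sq_eq_sum (d : ℕ) (e : EuclideanSpace ℝ (Fin d)) :
    ‖e‖ ^ 2 = ∑ j, e j ^ 2 := by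
  rw [EuclideanSpace.norm_eq, Real.sq_sqrt (Finset.sum_nonneg fun j _ => by positivity)]
  simp [Real.norm_eq_abs, sq_abs]

lemma groot_stdGaussian_tail_inner (d : ℕ) (e : EuclideanSpace ℝ (Fin d)) (he : e ≠ 0)
    {s : ℝ} (hs : 0 ≤ s) :
    stdGaussian d {x | s * ‖e‖ ≤ ⟪e, x⟫} ≤ ENNReal.ofReal (Real.exp (-(s ^ 2) / 2)) := by
  have hepos : 0 < ‖e‖ := norm_pos_iff.mpr he
  set l := s / ‖e‖ with hl
  have hmeas : Measurable fun x : EuclideanSpace ℝ (Fin d) =>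
      ENNReal.ofReal (Real.exp (l * ⟪e, x⟫)) := by
    refine ENNReal.measurable_ofReal.comp <| Real.measurable_exp.comp <|
      (measurable_const.mul ?_)
    exact (continuous_const.inner continuous_id).measurable
  have hsub : {x : EuclideanSpace ℝ (Fin d) | s * ‖e‖ ≤ ⟪e, x⟫} ⊆
      {x | ENNReal.ofReal (Real.exp (s ^ 2)) ≤ ENNReal.ofReal (Real.exp (l * ⟪e, x⟫))} := by
    intro x hx
    simp only [Set.mem_setOf_eq] at hx ⊢
    apply ENNReal.ofReal_le_ofReal
    apply Real.exp_le_exp.mpr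
    have : s ^ 2 = l * (s * ‖e‖) := by rw [hl]; field_simp
    rw [this]
    exact mul_le_mul_of_nonneg_left hx (by positivity)
  have hint : ∫⁻ x, ENNReal.ofReal (Real.exp (l * ⟪e, x⟫)) ∂(stdGaussian d) =
      ENNReal.ofReal (Real.exp (s ^ 2 / 2)) := by
    rw [groot_stdGaussian_lintegral_eq]
    have : ∀ y : Fin d → ℝ,
        ENNReal.ofReal (Real.exp (l * ⟪e, (MeasurableEquiv.toLp 2 (Fin d → ℝ)) y⟫)) =
          ∏ j, ENNReal.ofReal (Real.exp (l * e j * y j)) := by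
      intro y
      rw [groot_inner_equiv_symm, Finset.mul_sum, Real.exp_sum,
        ← ENNReal.ofReal_prod_of_nonneg (fun j _ => (Real.exp_pos _).le)]
      simp [mul_assoc]
    simp_rw [this]
    rw [groot_lintegral_pi_prod (fun j t => ENNReal.ofReal (Real.exp (l * e j * t)))
      (fun j => by fun_prop)]
    have : ∀ j : Fin d, ∫⁻ t, ENNReal.ofReal (Real.exp (l * e j * t)) ∂(gaussianReal 0 1)
        = ENNReal.ofReal (Real.exp ((l * e j) ^ 2 / 2)) := fun j => groot_gaussian_lintegral_exp _
    simp_rw [this]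
    rw [← ENNReal.ofReal_prod_of_nonneg (fun j _ => (Real.exp_pos _).le), ← Real.exp_sum]
    congr 1
    rw [← Finset.sum_div]
    congr 1
    simp_rw [mul_pow]
    rw [← Finset.mul_sum, ← groot_norm_sq_eq_sum, hl, div_pow,
      div_mul_cancel₀ _ (by positivity : ‖e‖ ^ 2 ≠ 0)]
  have hmarkov := mul_meas_ge_le_lintegral (μ := stdGaussian d) hmeas
    (ENNReal.ofReal (Real.exp (s ^ 2)))
  rw [hint] at hmarkov
  calc stdGaussian d {x | s * ‖e‖ ≤ ⟪e, x⟫}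
      ≤ stdGaussian d {x | ENNReal.ofReal (Real.exp (s ^ 2)) ≤
          ENNReal.ofReal (Real.exp (l * ⟪e, x⟫))} := measure_mono hsub
    _ ≤ ENNReal.ofReal (Real.exp (s ^ 2 / 2)) / ENNReal.ofReal (Real.exp (s ^ 2)) := by
        rw [ENNReal.le_div_iff_mul_le
          (Or.inl (ne_of_gt (ENNReal.ofReal_pos.mpr (Real.exp_pos _))))
          (Or.inl ENNReal.ofReal_ne_top), mul_comm]
        exact hmarkov
    _ = ENNReal.ofReal (Real.exp (-(s ^ 2) / 2)) := by
        rw [← ENNReal.ofReal_div_of_pos (Real.exp_pos _), ← Real.exp_sub]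
        congr 1
        ring

lemma groot_stdGaussian_tail_abs_inner (d : ℕ) (e : EuclideanSpace ℝ (Fin d)) (he : e ≠ 0)
    {s : ℝ} (hs : 0 ≤ s) :
    stdGaussian d {x | s * ‖e‖ ≤ |⟪e, x⟫|} ≤ ENNReal.ofReal (2 * Real.exp (-(s ^ 2) / 2)) := by
  have hsub : {x : EuclideanSpace ℝ (Fin d) | s * ‖e‖ ≤ |⟪e, x⟫|} ⊆
      {x | s * ‖e‖ ≤ ⟪e, x⟫} ∪ {x | s * ‖-e‖ ≤ ⟪-e, x⟫} := by
    intro x hx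
    simp only [Set.mem_setOf_eq] at hx
    simp only [Set.mem_union, Set.mem_setOf_eq, inner_neg_left, norm_neg]
    rcases le_abs.mp hx with h | h
    · exact Or.inl h
    · exact Or.inr h
  calc stdGaussian d {x | s * ‖e‖ ≤ |⟪e, x⟫|}
      ≤ stdGaussian d ({x | s * ‖e‖ ≤ ⟪e, x⟫} ∪ {x | s * ‖-e‖ ≤ ⟪-e, x⟫}) := measure_mono hsub
    _ ≤ stdGaussian d {x | s * ‖e‖ ≤ ⟪e, x⟫} + stdGaussian d {x | s * ‖-e‖ ≤ ⟪-e, x⟫} :=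
        measure_union_le _ _
    _ ≤ ENNReal.ofReal (Real.exp (-(s ^ 2) / 2)) + ENNReal.ofReal (Real.exp (-(s ^ 2) / 2)) :=
        add_le_add (groot_stdGaussian_tail_inner d e he hs)
          (groot_stdGaussian_tail_inner d (-e) (neg_ne_zero.mpr he) hs)
    _ = ENNReal.ofReal (2 * Real.exp (-(s ^ 2) / 2)) := by
        rw [two_mul, ENNReal.ofReal_add (Real.exp_pos _).le (Real.exp_pos _).le]

lemma groot_stdGaussian_lower_tail (d : ℕ) {a : ℝ} (ha : 0 < a) (ha1 : a < 1) :
    stdGaussian d {x | ‖x‖ ^ 2 ≤ a * d} ≤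
      ENNReal.ofReal ((Real.exp ((1 - a) / 2) * Real.sqrt a) ^ d) := by
  set l := (1 - a) / (2 * a) with hldef
  have hlpos : 0 < l := by
    apply div_pos <;> linarith
  have hmeas : Measurable fun x : EuclideanSpace ℝ (Fin d) =>
      ENNReal.ofReal (Real.exp (-l * ‖x‖ ^ 2)) := by
    refine ENNReal.measurable_ofReal.comp <| Real.measurable_exp.comp <|
      (measurable_const.mul ?_)
    exact (continuous_norm.pow 2).measurable
  have hsub : {x : EuclideanSpace ℝ (Fin d) | ‖x‖ ^ 2 ≤ a * d} ⊆
      {x | ENNReal.ofReal (Real.exp (-l * (a * d))) ≤ ENNReal.ofReal (Real.exp (-l * ‖x‖ ^ 2))} := by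
    intro x hx
    simp only [Set.mem_setOf_eq] at hx ⊢
    apply ENNReal.ofReal_le_ofReal
    apply Real.exp_le_exp.mpr
    nlinarith
  have hint : ∫⁻ x, ENNReal.ofReal (Real.exp (-l * ‖x‖ ^ 2)) ∂(stdGaussian d) =
      ENNReal.ofReal (Real.sqrt a ^ d) := by
    rw [groot_stdGaussian_lintegral_eq]
    have key : ∀ y : Fin d → ℝ,
        ENNReal.ofReal (Real.exp (-l * ‖(MeasurableEquiv.toLp 2 (Fin d → ℝ)) y‖ ^ 2)) =
          ∏ j, ENNReal.ofReal (Real.exp (-l * y j ^ 2)) := by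
      intro y
      rw [groot_norm_sq_eq_sum, Finset.mul_sum, Real.exp_sum,
        ← ENNReal.ofReal_prod_of_nonneg (fun j _ => (Real.exp_pos _).le)]
      congr 1 with j
    simp_rw [key]
    rw [groot_lintegral_pi_prod (fun j t => ENNReal.ofReal (Real.exp (-l * t ^ 2)))
      (fun j => by fun_prop)]
    simp_rw [groot_gaussian_lintegral_exp_neg_sq hlpos.le]
    rw [Finset.prod_const, Finset.card_univ, Fintype.card_fin,
      ← ENNReal.ofReal_pow (by positivity)]
    congr 2
    rw [← inv_inv (Real.sqrt a), hldef,
      show (1 : ℝ) + 2 * ((1 - a) / (2 * a)) = a⁻¹ by field_simp; ring,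
      Real.sqrt_inv, inv_inv]
  have hmarkov := mul_meas_ge_le_lintegral (μ := stdGaussian d) hmeas
    (ENNReal.ofReal (Real.exp (-l * (a * d))))
  rw [hint] at hmarkov
  calc stdGaussian d {x | ‖x‖ ^ 2 ≤ a * d}
      ≤ stdGaussian d {x | ENNReal.ofReal (Real.exp (-l * (a * d))) ≤
          ENNReal.ofReal (Real.exp (-l * ‖x‖ ^ 2))} := measure_mono hsub
    _ ≤ ENNReal.ofReal (Real.sqrt a ^ d) / ENNReal.ofReal (Real.exp (-l * (a * d))) := by
        rw [ENNReal.le_div_iff_mul_le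
          (Or.inl (ne_of_gt (ENNReal.ofReal_pos.mpr (Real.exp_pos _))))
          (Or.inl ENNReal.ofReal_ne_top), mul_comm]
        exact hmarkov
    _ = ENNReal.ofReal ((Real.exp ((1 - a) / 2) * Real.sqrt a) ^ d) := by
        rw [← ENNReal.ofReal_div_of_pos (Real.exp_pos _)]
        congr 1
        rw [div_eq_mul_inv, ← Real.exp_neg, mul_pow, mul_comm]
        congr 1
        rw [show -(-l * (a * d)) = d * ((1 - a)/2) by rw [hldef]; field_simp,
          Real.exp_nat_mul]

lemma groot_sep_lemma {E : Type*} [NormedAddCommGroup E] [InnerProductSpace ℝ E]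
    {n : ℕ} (x : Fin n → E) (i0 : Fin n) (e : E) {β : ℝ} (hβ0 : 0 < β) (hβ1 : β < 1)
    (hz : β • x i0 + (1 - β) • e ∈ convexHull ℝ (Set.range x)) :
    ∃ i, (1 - β) * ‖e‖ ^ 2 ≤ (1 + β) * |⟪e, x i⟫| := by
  obtain ⟨i1, _, hmax⟩ := Finset.exists_max_image Finset.univ (fun i => |⟪e, x i⟫|)
    ⟨i0, Finset.mem_univ i0⟩
  set M := |⟪e, x i1⟫| with hM
  have hlin : IsLinearMap ℝ (fun y : E => ⟪e, y⟫) :=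
    ⟨fun u v => inner_add_right e u v, fun c u => real_inner_smul_right e u c⟩
  have hhull : convexHull ℝ (Set.range x) ⊆ {y | ⟪e, y⟫ ≤ M} := by
    apply convexHull_min ?_ (convex_halfSpace_le hlin M)
    rintro _ ⟨i, rfl⟩
    exact le_trans (le_abs_self _) (hmax i (Finset.mem_univ i))
  have h1 : ⟪e, β • x i0 + (1 - β) • e⟫ ≤ M := hhull hz
  rw [inner_add_right, real_inner_smul_right, real_inner_smul_right,
    real_inner_self_eq_norm_sq] at h1
  refine ⟨i1, ?_⟩
  have h3 : -M ≤ ⟪e, x i0⟫ := le_trans (neg_le_neg (hmax i0 (Finset.mem_univ i0))) (neg_abs_le _)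
  nlinarith [mul_le_mul_of_nonneg_left h3 hβ0.le]

end Auxiliary

/-- Let `β ∈ (0,1)`, `C_β = (1+β)/(1-β)`, and for each dimension `d` let
`N d ≪ exp(d/(2(C_β² + 2)))` in the sense that `N d · exp(-d/(2(C_β² + 2))) → 0`.
If, for each `d`, `x_1, …, x_{N d}, ε` are i.i.d. `N(0, I_d)` random vectors and
`z = β • x_1 + (1-β) • ε`, then `P(z ∉ Conv({x_1, …, x_{N d}})) → 1` as `d → ∞`. -/
theorem groot_prob_not_mem_convexHull_tendsto_one
    (β : ℝ) (hβ : β ∈ Set.Ioo (0 : ℝ) 1)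
    (N : ℕ → ℕ) (hNpos : ∀ d, 0 < N d)
    (hN : Tendsto
      (fun d : ℕ => (N d : ℝ) * Real.exp (-(d / (2 * (((1 + β) / (1 - β)) ^ 2 + 2)))))
      atTop (nhds 0))
    (Ω : ℕ → Type*) [∀ d, MeasurableSpace (Ω d)]
    (P : ∀ d, Measure (Ω d)) [∀ d, IsProbabilityMeasure (P d)]
    (x : ∀ d, Fin (N d) → Ω d → EuclideanSpace ℝ (Fin d))
    (ε : ∀ d, Ω d → EuclideanSpace ℝ (Fin d))
    (hxmeas : ∀ d i, Measurable (x d i)) (hεmeas : ∀ d, Measurable (ε d))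
    (hindep : ∀ d, iIndepFun
      (Fin.cons (ε d) (x d) : Fin (N d + 1) → Ω d → EuclideanSpace ℝ (Fin d)) (P d))
    (hlawx : ∀ d i, Measure.map (x d i) (P d) = stdGaussian d)
    (hlawε : ∀ d, Measure.map (ε d) (P d) = stdGaussian d) :
    Tendsto
      (fun d : ℕ => P d {ω | β • x d ⟨0, hNpos d⟩ ω + (1 - β) • ε d ω ∉
        convexHull ℝ (Set.range fun i => x d i ω)})
      atTop (nhds 1) := by
  obtain ⟨hβ0, hβ1⟩ := hβ
  set C : ℝ := (1 + β) / (1 - β) with hCdef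
  have hC : 0 < C := div_pos (by linarith) (by linarith)
  have hC2 : 0 < C ^ 2 + 2 := by positivity
  set a : ℝ := C ^ 2 / (C ^ 2 + 2) with hadef
  have ha0 : 0 < a := by positivity
  have ha1 : a < 1 := by rw [hadef, div_lt_one hC2]; linarith
  set ρ : ℝ := Real.exp ((1 - a) / 2) * Real.sqrt a with hρdef
  have hρ0 : 0 ≤ ρ := by positivity
  have hρ1 : ρ < 1 := by
    have hsq : ρ ^ 2 = Real.exp (1 - a) * a := by
      rw [hρdef, mul_pow, Real.sq_sqrt ha0.le, sq, ← Real.exp_add]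
      norm_num
    have hlt : Real.exp (1 - a) * a < 1 := by
      have h := Real.add_one_lt_exp (by linarith : a - 1 ≠ 0)
      have h2 : a < Real.exp (a - 1) := by linarith
      calc Real.exp (1 - a) * a < Real.exp (1 - a) * Real.exp (a - 1) := by
            exact mul_lt_mul_of_pos_left h2 (Real.exp_pos _)
        _ = 1 := by rw [← Real.exp_add]; norm_num
    nlinarith
  -- the real-valued upper bound sequence
  set G : ℕ → ℝ := fun d => ρ ^ d + (N d : ℝ) * Real.exp (-(d / (2 * (C ^ 2 + 2)))) * 2
    with hGdef
  have hGto : Tendsto G atTop (nhds 0) := by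
    have h1 : Tendsto (fun d : ℕ => ρ ^ d) atTop (nhds 0) :=
      tendsto_pow_atTop_nhds_zero_of_lt_one hρ0 hρ1
    have h2 := hN.mul_const 2
    rw [zero_mul] at h2
    simpa using h1.add h2
  have main : ∀ d : ℕ, 1 ≤ d →
      1 - ENNReal.ofReal (G d) ≤ P d {ω | β • x d ⟨0, hNpos d⟩ ω + (1 - β) • ε d ω ∉
        convexHull ℝ (Set.range fun i => x d i ω)} := by
    intro d hd
    have hd1 : (1 : ℝ) ≤ (d : ℝ) := by exact_mod_cast hd
    set s : ℝ := Real.sqrt (a * d) / C with hsdef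
    have hs0 : 0 ≤ s := by positivity
    have hs2 : s ^ 2 = (d : ℝ) / (C ^ 2 + 2) := by
      rw [hsdef, div_pow, Real.sq_sqrt (by positivity), hadef]
      field_simp
    -- events
    set Aset : Set (EuclideanSpace ℝ (Fin d)) := {e | ‖e‖ ^ 2 ≤ a * d} with hAset
    set Bs : Set (EuclideanSpace ℝ (Fin d) × EuclideanSpace ℝ (Fin d)) :=
      {p | a * d ≤ ‖p.1‖ ^ 2 ∧ (1 - β) * ‖p.1‖ ^ 2 ≤ (1 + β) * |⟪p.1, p.2⟫|} with hBs
    have hAm : MeasurableSet Aset :=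
      measurableSet_le ((continuous_norm.pow 2).measurable) measurable_const
    have hBsm : MeasurableSet Bs := by
      apply MeasurableSet.inter
      · exact measurableSet_le measurable_const
          (((continuous_norm.comp continuous_fst).pow 2).measurable)
      · exact measurableSet_le
          ((continuous_const.mul ((continuous_norm.comp continuous_fst).pow 2)).measurable)
          ((continuous_const.mul (continuous_abs.comp continuous_inner)).measurable)
    set T : Set (Ω d) := (ε d ⁻¹' Aset) ∪ ⋃ i, (fun ω => (ε d ω, x d i ω)) ⁻¹' Bs with hT
    have hTm : MeasurableSet T :=
      ((hεmeas d) hAm).union (MeasurableSet.iUnion fun i =>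
        ((hεmeas d).prodMk (hxmeas d i)) hBsm)
    have hincl : {ω | β • x d ⟨0, hNpos d⟩ ω + (1 - β) • ε d ω ∈
        convexHull ℝ (Set.range fun i => x d i ω)} ⊆ T := by
      intro ω hω
      obtain ⟨i, hi⟩ := groot_sep_lemma (fun i => x d i ω) ⟨0, hNpos d⟩ (ε d ω) hβ0 hβ1 hω
      rcases le_total (‖ε d ω‖ ^ 2) (a * d) with h | h
      · exact Or.inl h
      · exact Or.inr (Set.mem_iUnion.mpr ⟨i, ⟨h, hi⟩⟩)
    -- bound on A
    have hPA : P d (ε d ⁻¹' Aset) ≤ ENNReal.ofReal (ρ ^ d) := by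
      have heq : P d (ε d ⁻¹' Aset) = stdGaussian d Aset := by
        rw [← hlawε d, Measure.map_apply (hεmeas d) hAm]
      rw [heq, hρdef]
      exact groot_stdGaussian_lower_tail d ha0 ha1
    -- bound on each B i
    have hPB : ∀ i, P d ((fun ω => (ε d ω, x d i ω)) ⁻¹' Bs) ≤
        ENNReal.ofReal (2 * Real.exp (-(s ^ 2) / 2)) := by
      intro i
      have hIndep : IndepFun (ε d) (x d i) (P d) := by
        have h := (hindep d).indepFun (i := 0) (j := i.succ) (Fin.succ_ne_zero i).symm
        simpa using h
      have hmap : Measure.map (fun ω => (ε d ω, x d i ω)) (P d) =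
          (stdGaussian d).prod (stdGaussian d) := by
        have h := (indepFun_iff_map_prod_eq_prod_map_map (hεmeas d).aemeasurable
          (hxmeas d i).aemeasurable).mp hIndep
        rw [hlawε d, hlawx d i] at h
        exact h
      have heq : P d ((fun ω => (ε d ω, x d i ω)) ⁻¹' Bs) =
          ((stdGaussian d).prod (stdGaussian d)) Bs := by
        rw [← hmap, Measure.map_apply ((hεmeas d).prodMk (hxmeas d i)) hBsm]
      rw [heq, Measure.prod_apply hBsm]
      have hsec : ∀ e : EuclideanSpace ℝ (Fin d), stdGaussian d (Prod.mk e ⁻¹' Bs) ≤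
          ENNReal.ofReal (2 * Real.exp (-(s ^ 2) / 2)) := by
        intro e
        by_cases he : a * d ≤ ‖e‖ ^ 2
        · have he0 : e ≠ 0 := by
            intro h0
            rw [h0] at he
            simp only [norm_zero] at he
            nlinarith
          have hsubset : Prod.mk e ⁻¹' Bs ⊆ {v | s * ‖e‖ ≤ |⟪e, v⟫|} := by
            intro v hv
            obtain ⟨hv1, hv2⟩ := hv
            simp only [Set.mem_setOf_eq]
            have hCe : ‖e‖ ^ 2 / C = (1 - β) * ‖e‖ ^ 2 / (1 + β) := by
              rw [hCdef]
              field_simp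
            have h1 : ‖e‖ ^ 2 / C ≤ |⟪e, v⟫| := by
              rw [hCe, div_le_iff₀ (by linarith : (0:ℝ) < 1 + β)]
              linarith [hv2]
            have hsqrt : Real.sqrt (a * d) ≤ ‖e‖ := by
              calc Real.sqrt (a * d) ≤ Real.sqrt (‖e‖ ^ 2) := Real.sqrt_le_sqrt hv1
                _ = ‖e‖ := Real.sqrt_sq (norm_nonneg e)
            have h2 : s * ‖e‖ ≤ ‖e‖ ^ 2 / C := by
              rw [hsdef, div_mul_eq_mul_div, sq]
              gcongr
            exact h2.trans h1
          exact le_trans (measure_mono hsubset)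
            (groot_stdGaussian_tail_abs_inner d e he0 hs0)
        · have hempty : Prod.mk e ⁻¹' Bs = ∅ := by
            ext v
            simp only [Set.mem_preimage, Set.mem_empty_iff_false, iff_false]
            intro hv
            exact he hv.1
          rw [hempty]
          simp
      calc ∫⁻ e, stdGaussian d (Prod.mk e ⁻¹' Bs) ∂(stdGaussian d)
          ≤ ∫⁻ _, ENNReal.ofReal (2 * Real.exp (-(s ^ 2) / 2)) ∂(stdGaussian d) :=
            lintegral_mono hsec
        _ = ENNReal.ofReal (2 * Real.exp (-(s ^ 2) / 2)) := by
            rw [lintegral_const, measure_univ, mul_one]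
    -- total bound
    have hPT : P d T ≤ ENNReal.ofReal (G d) := by
      calc P d T ≤ P d (ε d ⁻¹' Aset) + P d (⋃ i, (fun ω => (ε d ω, x d i ω)) ⁻¹' Bs) :=
            measure_union_le _ _
        _ ≤ ENNReal.ofReal (ρ ^ d) +
              ∑ i, P d ((fun ω => (ε d ω, x d i ω)) ⁻¹' Bs) :=
            add_le_add hPA (measure_iUnion_fintype_le _ _)
        _ ≤ ENNReal.ofReal (ρ ^ d) +
              ∑ _i : Fin (N d), ENNReal.ofReal (2 * Real.exp (-(s ^ 2) / 2)) :=
            add_le_add le_rfl (Finset.sum_le_sum fun i _ => hPB i)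
        _ = ENNReal.ofReal (ρ ^ d) +
              (N d : ℝ≥0∞) * ENNReal.ofReal (2 * Real.exp (-(s ^ 2) / 2)) := by
            rw [Finset.sum_const, Finset.card_univ, Fintype.card_fin, nsmul_eq_mul]
        _ = ENNReal.ofReal (G d) := by
            rw [hGdef]
            rw [show -(s ^ 2) / 2 = -((d : ℝ) / (2 * (C ^ 2 + 2))) by
              rw [neg_div, hs2, div_div, mul_comm]]
            rw [ENNReal.ofReal_add (by positivity) (by positivity)]
            congr 1
            rw [← ENNReal.ofReal_natCast (N d), ← ENNReal.ofReal_mul (by positivity)]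
            congr 1
            ring
    -- conclude
    have hcompl : Tᶜ ⊆ {ω | β • x d ⟨0, hNpos d⟩ ω + (1 - β) • ε d ω ∉
        convexHull ℝ (Set.range fun i => x d i ω)} := by
      intro ω hω hmem
      exact hω (hincl hmem)
    calc 1 - ENNReal.ofReal (G d) ≤ 1 - P d T := tsub_le_tsub_left hPT 1
      _ = P d Tᶜ := (prob_compl_eq_one_sub hTm).symm
      _ ≤ _ := measure_mono hcompl
  -- final squeeze
  have hlow : Tendsto (fun d : ℕ => 1 - ENNReal.ofReal (G d)) atTop (nhds 1) := by
    have h2 : Tendsto (fun d : ℕ => ENNReal.ofReal (G d)) atTop (nhds 0) := by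
      have h3 := ENNReal.tendsto_ofReal (α := ℕ) hGto
      simpa using h3
    have := ENNReal.Tendsto.sub (tendsto_const_nhds (x := (1 : ℝ≥0∞)))
      h2 (Or.inl ENNReal.one_ne_top)
    simpa using this
  refine tendsto_of_tendsto_of_tendsto_of_le_of_le' hlow tendsto_const_nhds ?_ ?_
  · exact (eventually_ge_atTop 1).mono fun d hd => main d hd
  · exact Eventually.of_forall fun d => prob_le_one
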